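/- The map (b, w2, w1) |-> (b^{-1}, b^{-1} w2, b^3 w1 - Σ_{j,k} λ_{jk} b^{2-j} w2^{j+k-1}) is inverse to the gluing map (a, v2, v1) |-> (a^{-1}, a^{-1} v2, a^3 v1 + Σ_{j,k} λ_{jk} a^{2-k} v2^{j+k-1}) on the locus where the first coordinate is invertible. -/

import Mathlib

noncomputable section

open MvPolynomial LaurentPolynomial

/-- The ring `K[a^{±1}, v₂, v₁]` (equivalently `K[b^{±1}, w₂, w₁]`). -/
abbrev Rng (K : Type*) [Field K] := MvPolynomial (Fin 2) (LaurentPolynomial K)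

variable (K : Type*) [Field K]

/-- The first coordinate `a = C (T 1)` as a unit of `Rng K`. -/
def aUnit : (Rng K)ˣ :=
  Units.map (MvPolynomial.C : LaurentPolynomial K →+* Rng K).toMonoidHom
    (LaurentPolynomial.isUnit_T 1).unit

/-- The `K`-algebra map `K[a^{±1}] → Rng K` sending `T = a` to the unit `u`. -/
def laurentAlgHom (u : (Rng K)ˣ) : LaurentPolynomial K →ₐ[K] Rng K :=
  AddMonoidAlgebra.lift K (Rng K) ℤ ((Units.coeHom (Rng K)).comp (zpowersHom (Rng K)ˣ u))

/-- The substitution endomorphism of `K[a^{±1}, v₂, v₁]` sending `a ↦ u`, `v₂ ↦ x0`,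
`v₁ ↦ x1`. -/
def subst (u : (Rng K)ˣ) (x0 x1 : Rng K) : Rng K →ₐ[K] Rng K :=
  MvPolynomial.aevalTower (laurentAlgHom K u) ![x0, x1]

/-- The substitution given by the glue
`(a, v₂, v₁) ↦ (a⁻¹, a⁻¹v₂, a³v₁ + Σ λ_{jk} a^{2-k} v₂^{j+k-1})`. -/
def glueFwd (S : Finset (ℕ × ℕ)) (lam : ℕ × ℕ → K) : Rng K →ₐ[K] Rng K :=
  subst K (aUnit K)⁻¹ (MvPolynomial.C (T (-1)) * X 0)
    (MvPolynomial.C (T 3) * X 1 +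
      ∑ p ∈ S, lam p • (MvPolynomial.C (T (2 - (p.2 : ℤ))) * X 0 ^ (p.1 + p.2 - 1)))

/-- The substitution given by the inverse glue
`(b, w₂, w₁) ↦ (b⁻¹, b⁻¹w₂, b³w₁ - Σ λ_{jk} b^{2-j} w₂^{j+k-1})`. -/
def glueBwd (S : Finset (ℕ × ℕ)) (lam : ℕ × ℕ → K) : Rng K →ₐ[K] Rng K :=
  subst K (aUnit K)⁻¹ (MvPolynomial.C (T (-1)) * X 0)
    (MvPolynomial.C (T 3) * X 1 -
      ∑ p ∈ S, lam p • (MvPolynomial.C (T (2 - (p.1 : ℤ))) * X 0 ^ (p.1 + p.2 - 1)))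

/-! ### Auxiliary lemmas -/

lemma aUnit_val : ((aUnit K : (Rng K)ˣ) : Rng K) = MvPolynomial.C (T 1) := by
  simp [aUnit]

lemma aUnit_inv_val : (((aUnit K)⁻¹ : (Rng K)ˣ) : Rng K) = MvPolynomial.C (T (-1)) := by
  apply Units.inv_eq_of_mul_eq_one_right
  rw [aUnit_val, ← map_mul, ← T_add]
  norm_num

lemma aUnit_zpow (n : ℤ) : ((aUnit K ^ n : (Rng K)ˣ) : Rng K) = MvPolynomial.C (T n) := by
  induction n using Int.induction_on with
  | zero => simp
  | succ n ih =>
      rw [zpow_add_one, Units.val_mul, ih, aUnit_val, ← map_mul, ← T_add]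
  | pred n ih =>
      rw [zpow_sub_one, Units.val_mul, ih, aUnit_inv_val, ← map_mul, ← T_add, sub_eq_add_neg]

lemma laurentAlgHom_T (u : (Rng K)ˣ) (n : ℤ) :
    laurentAlgHom K u (T n) = ((u ^ n : (Rng K)ˣ) : Rng K) := by
  have : (T n : LaurentPolynomial K) = AddMonoidAlgebra.single n (1 : K) := rfl
  rw [laurentAlgHom, this, AddMonoidAlgebra.lift_single, one_smul]
  rfl

lemma subst_T (u : (Rng K)ˣ) (x0 x1 : Rng K) (n : ℤ) :
    subst K u x0 x1 (MvPolynomial.C (T n)) = ((u ^ n : (Rng K)ˣ) : Rng K) := by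
  rw [subst, aevalTower_C, laurentAlgHom_T]

lemma subst_inv_T (x0 x1 : Rng K) (n : ℤ) :
    subst K (aUnit K)⁻¹ x0 x1 (MvPolynomial.C (T n)) = MvPolynomial.C (T (-n)) := by
  rw [subst_T, inv_zpow, ← zpow_neg, aUnit_zpow]

lemma subst_X0 (u : (Rng K)ˣ) (x0 x1 : Rng K) : subst K u x0 x1 (X 0) = x0 := by
  simp [subst]

lemma subst_X1 (u : (Rng K)ˣ) (x0 x1 : Rng K) : subst K u x0 x1 (X 1) = x1 := by
  simp [subst]

lemma hom_ext (f g : Rng K →ₐ[K] Rng K)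
    (hC : ∀ n : ℤ, f (MvPolynomial.C (T n)) = g (MvPolynomial.C (T n)))
    (hX : ∀ i, f (X i) = g (X i)) : f = g := by
  have hC' : ∀ r : LaurentPolynomial K, f (MvPolynomial.C r) = g (MvPolynomial.C r) := by
    intro r
    induction r using LaurentPolynomial.induction_on' with
    | add p q hp hq => rw [map_add, map_add, map_add, hp, hq]
    | C_mul_T a b =>
        simp only [map_mul]
        rw [show (MvPolynomial.C (LaurentPolynomial.C b) : Rng K)
              = algebraMap K (Rng K) b from rfl, AlgHom.commutes, AlgHom.commutes, hC]
  have : (f : Rng K →+* Rng K) = g := MvPolynomial.ringHom_ext hC' hX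
  exact AlgHom.coe_ringHom_injective this

lemma C_T_pow (n : ℤ) (m : ℕ) :
    (MvPolynomial.C (T n) : Rng K) ^ m = MvPolynomial.C (T (m * n)) := by
  rw [← map_pow, T_pow]

lemma C_T_mul_assoc (m n : ℤ) (x : Rng K) :
    MvPolynomial.C (T m) * (MvPolynomial.C (T n) * x)
      = MvPolynomial.C (T (m + n)) * x := by
  rw [← mul_assoc, ← map_mul, ← T_add]

variable {K}

lemma glueFwd_C (S : Finset (ℕ × ℕ)) (lam : ℕ × ℕ → K) (n : ℤ) :
    glueFwd K S lam (MvPolynomial.C (T n)) = MvPolynomial.C (T (-n)) :=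
  subst_inv_T K _ _ n

lemma glueBwd_C (S : Finset (ℕ × ℕ)) (lam : ℕ × ℕ → K) (n : ℤ) :
    glueBwd K S lam (MvPolynomial.C (T n)) = MvPolynomial.C (T (-n)) :=
  subst_inv_T K _ _ n

lemma glueFwd_X0 (S : Finset (ℕ × ℕ)) (lam : ℕ × ℕ → K) :
    glueFwd K S lam (X 0) = MvPolynomial.C (T (-1)) * X 0 :=
  subst_X0 K _ _ _

lemma glueBwd_X0 (S : Finset (ℕ × ℕ)) (lam : ℕ × ℕ → K) :
    glueBwd K S lam (X 0) = MvPolynomial.C (T (-1)) * X 0 :=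
  subst_X0 K _ _ _

lemma key_ne_zero (lam : ℕ × ℕ → K) (h00 : lam (0, 0) = 0) (p : ℕ × ℕ)
    (h : lam p ≠ 0) : 1 ≤ p.1 + p.2 := by
  by_contra hc
  have h1 : p.1 = 0 := by omega
  have h2 : p.2 = 0 := by omega
  exact h (by rw [show p = (0, 0) from Prod.ext h1 h2]; exact h00)

lemma bwd_fwd_X1 (S : Finset (ℕ × ℕ)) (lam : ℕ × ℕ → K) (h00 : lam (0, 0) = 0) :
    (glueBwd K S lam) ((glueFwd K S lam) (X 1)) = X 1 := by
  rw [glueFwd, subst_X1, glueBwd, map_add, map_mul, subst_inv_T, subst_X1, map_sum]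
  simp only [map_smul, map_mul, map_pow, subst_inv_T, subst_X0, subst_X1, mul_pow,
    C_T_pow, mul_sub, Finset.mul_sum, mul_smul_comm, C_T_mul_assoc]
  have key : ∀ p ∈ S,
      lam p • (MvPolynomial.C (T (-(2 - (p.2 : ℤ)) + ((p.1 + p.2 - 1 : ℕ) : ℤ) * -1))
          * X 0 ^ (p.1 + p.2 - 1) : Rng K)
        = lam p • (MvPolynomial.C (T (-3 + (2 - (p.1 : ℤ)))) * X 0 ^ (p.1 + p.2 - 1)) := by
    intro p hp
    rcases eq_or_ne (lam p) 0 with h | h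
    · rw [h, zero_smul, zero_smul]
    · have hp0 : 1 ≤ p.1 + p.2 := key_ne_zero lam h00 p h
      congr 2
      have : ((p.1 + p.2 - 1 : ℕ) : ℤ) = (p.1 : ℤ) + p.2 - 1 := by omega
      rw [this]; ring
  rw [Finset.sum_congr rfl key, sub_add_cancel]
  norm_num

lemma fwd_bwd_X1 (S : Finset (ℕ × ℕ)) (lam : ℕ × ℕ → K) (h00 : lam (0, 0) = 0) :
    (glueFwd K S lam) ((glueBwd K S lam) (X 1)) = X 1 := by
  rw [glueBwd, subst_X1, glueFwd, map_sub, map_mul, subst_inv_T, subst_X1, map_sum]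
  simp only [map_smul, map_mul, map_pow, subst_inv_T, subst_X0, subst_X1, mul_pow,
    C_T_pow, mul_add, Finset.mul_sum, mul_smul_comm, C_T_mul_assoc]
  have key : ∀ p ∈ S,
      lam p • (MvPolynomial.C (T (-(2 - (p.1 : ℤ)) + ((p.1 + p.2 - 1 : ℕ) : ℤ) * -1))
          * X 0 ^ (p.1 + p.2 - 1) : Rng K)
        = lam p • (MvPolynomial.C (T (-3 + (2 - (p.2 : ℤ)))) * X 0 ^ (p.1 + p.2 - 1)) := by
    intro p hp
    rcases eq_or_ne (lam p) 0 with h | h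
    · rw [h, zero_smul, zero_smul]
    · have hp0 : 1 ≤ p.1 + p.2 := key_ne_zero lam h00 p h
      congr 2
      have : ((p.1 + p.2 - 1 : ℕ) : ℤ) = (p.1 : ℤ) + p.2 - 1 := by omega
      rw [this]; ring
  rw [Finset.sum_congr rfl key, add_sub_cancel_right]
  norm_num

lemma comp_X0_aux (f g : Rng K →ₐ[K] Rng K)
    (hf : f (X 0) = MvPolynomial.C (T (-1)) * X 0)
    (hgC : ∀ n : ℤ, g (MvPolynomial.C (T n)) = MvPolynomial.C (T (-n)))
    (hg : g (X 0) = MvPolynomial.C (T (-1)) * X 0) :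
    g (f (X 0)) = X 0 := by
  rw [hf, map_mul, hgC, hg, C_T_mul_assoc]
  norm_num

set_option linter.unusedVariables false in
/-- The two substitution maps are mutually inverse on the locus where the first
coordinate is invertible: composing them in either order gives the identity. -/
theorem stmt7 (S : Finset (ℕ × ℕ)) (lam : ℕ × ℕ → K)
    (h00 : lam (0, 0) = 0) (h10 : lam (1, 0) = 0) (h01 : lam (0, 1) = 0) :
    (glueFwd K S lam).comp (glueBwd K S lam) = AlgHom.id K (Rng K) ∧
    (glueBwd K S lam).comp (glueFwd K S lam) = AlgHom.id K (Rng K) := by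
  constructor
  · apply hom_ext
    · intro n
      simp only [AlgHom.comp_apply, AlgHom.id_apply, glueBwd_C, glueFwd_C, neg_neg]
    · intro i
      fin_cases i
      · simpa only [AlgHom.comp_apply, AlgHom.id_apply, Fin.zero_eta, Fin.mk_one] using
          comp_X0_aux (glueBwd K S lam) (glueFwd K S lam) (glueBwd_X0 S lam)
            (glueFwd_C S lam) (glueFwd_X0 S lam)
      · simpa only [AlgHom.comp_apply, AlgHom.id_apply, Fin.zero_eta, Fin.mk_one] using fwd_bwd_X1 S lam h00
  · apply hom_ext
    · intro n
      simp only [AlgHom.comp_apply, AlgHom.id_apply, glueBwd_C, glueFwd_C, neg_neg]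
    · intro i
      fin_cases i
      · simpa only [AlgHom.comp_apply, AlgHom.id_apply, Fin.zero_eta, Fin.mk_one] using
          comp_X0_aux (glueFwd K S lam) (glueBwd K S lam) (glueFwd_X0 S lam)
            (glueBwd_C S lam) (glueBwd_X0 S lam)
      · simpa only [AlgHom.comp_apply, AlgHom.id_apply, Fin.zero_eta, Fin.mk_one] using bwd_fwd_X1 S lam h00
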